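/- Let F be a field of characteristic 0 and n ≥ 1. For each i = 1, …, n, let φᵢ be the F-algebra automorphism of the polynomial ring F[t₁, …, tₙ] determined by φᵢ(tⱼ) = tⱼ − δ_{i,j}. If J is an ideal of F[t₁, …, tₙ] with φᵢ(J) ⊆ J for all i, then J = 0 or J = F[t₁, …, tₙ]. -/

import Mathlib

open MvPolynomial Finset

section Aux

variable {F : Type*} [Field F] [CharZero F]

/-- A multivariate polynomial vanishing on the natural-number grid is zero. -/
private lemma aux_grid_zero : ∀ (m : ℕ) (p : MvPolynomial (Fin m) F),
    (∀ x : Fin m → ℕ, eval (fun j => (x j : F)) p = 0) → p = 0 := by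
  intro m
  induction m with
  | zero =>
    intro p h
    rw [eq_C_of_isEmpty p]
    have := h 0
    rw [eq_C_of_isEmpty p, eval_C] at this
    rw [this, map_zero]
  | succ m ih =>
    intro p h
    apply (finSuccEquiv F m).injective
    rw [map_zero]
    apply Polynomial.ext
    intro k
    rw [Polynomial.coeff_zero]
    apply ih
    intro x
    have key : ∀ y : ℕ,
        Polynomial.eval (y : F)
          (Polynomial.map (eval fun j => (x j : F)) (finSuccEquiv F m p)) = 0 := by
      intro y
      rw [← eval_eq_eval_mv_eval']
      have hpt : (Fin.cons (y : F) (fun j => (x j : F)) : Fin (m + 1) → F)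
          = fun j => ((Fin.cons y x : Fin (m+1) → ℕ) j : F) := by
        funext j
        refine Fin.cases ?_ (fun j => ?_) j <;> simp
      rw [hpt]
      exact h _
    have hmap : Polynomial.map (eval fun j => (x j : F)) (finSuccEquiv F m p) = 0 := by
      apply Polynomial.eq_zero_of_infinite_isRoot
      apply Set.infinite_of_injective_forall_mem
        (f := fun y : ℕ => (y : F)) Nat.cast_injective
      intro y
      exact key y
    have := congrArg (fun q => Polynomial.coeff q k) hmap
    simpa [Polynomial.coeff_map] using this

private lemma aux_eval_aeval {n : ℕ} (x : Fin n → F)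
    (g : Fin n → MvPolynomial (Fin n) F) (f : MvPolynomial (Fin n) F) :
    eval x (aeval g f) = eval (fun j => eval x (g j)) f := by
  rw [aeval_def, eval₂_comp_left (eval x)]
  have hc : (eval x).comp (algebraMap F (MvPolynomial (Fin n) F)) = RingHom.id F :=
    RingHom.ext fun a => by simp
  rw [hc]
  rfl

/-- Binomial bound: `(X i - 1)^m - X i ^ m` has total degree at most `m - 1`. -/
private lemma aux_pow_sub {n : ℕ} (i : Fin n) (m : ℕ) :
    ((X i - 1 : MvPolynomial (Fin n) F) ^ m - X i ^ m).totalDegree ≤ m - 1 := by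
  cases m with
  | zero => simp
  | succ m =>
    rw [sub_pow, Finset.sum_range_succ]
    have htop : ((-1 : MvPolynomial (Fin n) F)) ^ (m + 1 + (m + 1)) = 1 := by
      rw [← two_mul, pow_mul]
      simp
    rw [htop]
    simp only [one_mul, Nat.sub_self, pow_zero, mul_one, Nat.choose_self, Nat.cast_one,
      add_sub_cancel_right]
    refine le_trans (totalDegree_finset_sum _ _) (Finset.sup_le fun k hk => ?_)
    rw [Finset.mem_range] at hk
    have hneg : ∀ j : ℕ, ((-1 : MvPolynomial (Fin n) F) ^ j).totalDegree = 0 := by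
      intro j
      rw [show ((-1 : MvPolynomial (Fin n) F)) = C (-1) by simp, ← map_pow, totalDegree_C]
    have hnat : (((m + 1).choose k : MvPolynomial (Fin n) F)).totalDegree = 0 := by
      rw [← map_natCast (C : F →+* MvPolynomial (Fin n) F), totalDegree_C]
    refine le_trans (totalDegree_mul _ _) ?_
    rw [hnat, add_zero]
    refine le_trans (totalDegree_mul _ _) ?_
    rw [one_pow, totalDegree_one, add_zero]
    refine le_trans (totalDegree_mul _ _) ?_
    rw [hneg, zero_add, totalDegree_X_pow]
    omega

/-- Total degree of the difference for a single monomial. -/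
private lemma aux_mono {n : ℕ} (i : Fin n) (a : Fin n →₀ ℕ) (c : F) :
    (aeval (fun j => X j - if i = j then 1 else 0) (monomial a c)
      - monomial a c).totalDegree ≤ (∑ j, a j) - 1 := by
  have hmono : (monomial a c : MvPolynomial (Fin n) F) = C c * ∏ j, X j ^ a j := by
    rw [monomial_eq]
    congr 1
    exact Finsupp.prod_fintype _ _ fun j => pow_zero _
  have haeval : aeval (fun j => X j - if i = j then 1 else 0) (monomial a c)
      = C c * ∏ j, ((X j - if i = j then 1 else 0 : MvPolynomial (Fin n) F)) ^ a j := by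
    rw [hmono, map_mul, map_prod]
    simp [algebraMap_eq]
  have hprod1 : (∏ j, ((X j - if i = j then 1 else 0 : MvPolynomial (Fin n) F)) ^ a j)
      = (X i - 1) ^ a i * ∏ j ∈ univ.erase i, X j ^ a j := by
    rw [← Finset.mul_prod_erase univ _ (mem_univ i), if_pos rfl]
    congr 1
    refine Finset.prod_congr rfl fun j hj => ?_
    rw [if_neg (Ne.symm (Finset.mem_erase.mp hj).1), sub_zero]
  have hprod2 : (∏ j, (X j : MvPolynomial (Fin n) F) ^ a j)
      = X i ^ a i * ∏ j ∈ univ.erase i, X j ^ a j :=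
    (Finset.mul_prod_erase univ _ (mem_univ i)).symm
  have hkey : aeval (fun j => X j - if i = j then 1 else 0) (monomial a c) - monomial a c
      = C c * (((X i - 1) ^ a i - X i ^ a i) * ∏ j ∈ univ.erase i, X j ^ a j) := by
    rw [haeval, hmono, hprod1, hprod2]
    ring
  rw [hkey]
  by_cases hai : a i = 0
  · rw [hai]
    simp
  · have hP : (∏ j ∈ univ.erase i, (X j : MvPolynomial (Fin n) F) ^ a j).totalDegree
        ≤ ∑ j ∈ univ.erase i, a j := by
      refine le_trans (totalDegree_finset_prod _ _) ?_
      refine Finset.sum_le_sum fun j _ => ?_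
      rw [totalDegree_X_pow]
    have hsum : a i + ∑ j ∈ univ.erase i, a j = ∑ j, a j :=
      Finset.add_sum_erase univ a (mem_univ i)
    refine le_trans (totalDegree_mul _ _) ?_
    rw [totalDegree_C, zero_add]
    refine le_trans (totalDegree_mul _ _) ?_
    have h1 := aux_pow_sub (F := F) i (a i)
    omega

/-- The difference operator strictly decreases total degree. -/
private lemma aux_deg {n : ℕ} (i : Fin n) (f : MvPolynomial (Fin n) F) :
    (aeval (fun j => X j - if i = j then 1 else 0) f - f).totalDegree
      ≤ f.totalDegree - 1 := by
  conv_lhs => rw [f.as_sum]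
  rw [map_sum, ← Finset.sum_sub_distrib]
  refine le_trans (totalDegree_finset_sum _ _) (Finset.sup_le fun a ha => ?_)
  refine le_trans (aux_mono i a _) ?_
  have h1 : (∑ j, a j) ≤ f.totalDegree := by
    have h2 := le_totalDegree ha
    have h3 : a.sum (fun _ e => e) = ∑ j, a j :=
      Finsupp.sum_fintype _ _ fun j => rfl
    omega
  omega

/-- A polynomial invariant under all the shift maps is constant. -/
private lemma aux_const {n : ℕ} (f : MvPolynomial (Fin n) F)
    (hinv : ∀ i : Fin n, aeval (fun j => X j - if i = j then 1 else 0) f = f) :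
    ∃ c : F, f = C c := by
  refine ⟨eval (fun _ : Fin n => (0 : F)) f, ?_⟩
  set c := eval (fun _ : Fin n => (0 : F)) f with hc
  have hgrid : ∀ x : Fin n → ℕ, eval (fun j => (x j : F)) f = c := by
    suffices H : ∀ N (x : Fin n → ℕ), (∑ j, x j) ≤ N → eval (fun j => (x j : F)) f = c by
      intro x; exact H _ x le_rfl
    intro N
    induction N with
    | zero =>
      intro x hx
      have hz : ∀ j, x j = 0 := fun j =>
        (Finset.sum_eq_zero_iff.mp (Nat.le_zero.mp hx)) j (mem_univ j)
      have hfun : (fun j => ((x j : ℕ) : F)) = fun _ => (0 : F) := by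
        funext j
        rw [hz j, Nat.cast_zero]
      rw [hfun]
    | succ N ih =>
      intro x hx
      by_cases h0 : ∑ j, x j ≤ N
      · exact ih x h0
      · obtain ⟨i, hi⟩ : ∃ i, x i ≠ 0 := by
          by_contra hall
          push_neg at hall
          rw [Finset.sum_eq_zero fun j _ => hall j] at h0
          omega
        set x' := Function.update x i (x i - 1) with hx'
        have herase : ∑ j ∈ univ.erase i, x' j = ∑ j ∈ univ.erase i, x j :=
          Finset.sum_congr rfl fun j hj => by
            rw [hx', Function.update_of_ne (Finset.mem_erase.mp hj).1]
        have hA : x i + ∑ j ∈ univ.erase i, x j = ∑ j, x j :=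
          Finset.add_sum_erase univ x (mem_univ i)
        have hA' : x' i + ∑ j ∈ univ.erase i, x' j = ∑ j, x' j :=
          Finset.add_sum_erase univ x' (mem_univ i)
        have hxi' : x' i = x i - 1 := by rw [hx', Function.update_self]
        have step : eval (fun j => (x j : F)) f = eval (fun j => (x' j : F)) f := by
          conv_lhs => rw [← hinv i]
          rw [aux_eval_aeval]
          have hpt : (fun j => eval (fun j => (x j : F))
              ((X j - if i = j then 1 else 0 : MvPolynomial (Fin n) F)))
              = fun j => (x' j : F) := by
            funext j
            by_cases hji : i = j
            · subst hji
              rw [map_sub, eval_X, if_pos rfl, map_one, hxi',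
                Nat.cast_sub (Nat.one_le_iff_ne_zero.mpr hi), Nat.cast_one]
            · rw [map_sub, eval_X, if_neg hji, map_zero, sub_zero, hx',
                Function.update_of_ne (Ne.symm hji)]
          rw [hpt]
        rw [step]
        exact ih x' (by omega)
  have hzero : ∀ x : Fin n → ℕ, eval (fun j => (x j : F)) (f - C c) = 0 := by
    intro x
    rw [map_sub, eval_C, hgrid x, sub_self]
  have h0 := aux_grid_zero n (f - C c) hzero
  exact sub_eq_zero.mp h0

private lemma aux_eqC {n : ℕ} (f : MvPolynomial (Fin n) F) (h : f.totalDegree = 0) :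
    ∃ c : F, f = C c := by
  refine ⟨coeff 0 f, ?_⟩
  ext m
  rw [coeff_C]
  by_cases hm : (0 : Fin n →₀ ℕ) = m
  · rw [if_pos hm, ← hm]
  · rw [if_neg hm]
    by_contra hne
    have hmem : m ∈ f.support := mem_support_iff.mpr hne
    have hall := (totalDegree_eq_zero_iff _ f).mp h m hmem
    exact hm (Finsupp.ext fun j => by simpa using hall j).symm

end Aux

/-- Let `F` be a field of characteristic `0`, `n ≥ 1`, and for each
`i` let `φᵢ` be the `F`-algebra automorphism of `F[t₁, …, tₙ]` with
`φᵢ(tⱼ) = tⱼ − δ_{i,j}`.  If `J` is an ideal stable under every `φᵢ`, then `J = 0` or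
`J = F[t₁, …, tₙ]`. -/
theorem stmt_4 {F : Type*} [Field F] [CharZero F] (n : ℕ) (hn : 1 ≤ n)
    (φ : Fin n → (MvPolynomial (Fin n) F ≃ₐ[F] MvPolynomial (Fin n) F))
    (hφ : ∀ i j : Fin n,
      φ i (MvPolynomial.X j) = MvPolynomial.X j - if i = j then 1 else 0)
    (J : Ideal (MvPolynomial (Fin n) F))
    (hstab : ∀ i : Fin n, ∀ f ∈ J, φ i f ∈ J) :
    J = ⊥ ∨ J = ⊤ := by
  classical
  by_cases hbot : J = ⊥
  · exact Or.inl hbot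
  right
  have hφa : ∀ (i : Fin n) (g : MvPolynomial (Fin n) F),
      φ i g = aeval (fun j => X j - if i = j then 1 else 0) g := by
    intro i g
    have hhom : (φ i).toAlgHom = aeval (fun j => X j - if i = j then 1 else 0) := by
      apply MvPolynomial.algHom_ext
      intro j
      simp [hφ i j]
    exact AlgHom.congr_fun hhom g
  obtain ⟨f0, hf0J, hf0⟩ := (Submodule.ne_bot_iff J).mp hbot
  have hex : ∃ d, ∃ f, f ∈ J ∧ f ≠ 0 ∧ f.totalDegree = d := ⟨_, f0, hf0J, hf0, rfl⟩
  obtain ⟨f, hfJ, hf, hfd⟩ := Nat.find_spec hex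
  set d := Nat.find hex with hd_def
  have hmin : ∀ g ∈ J, g ≠ 0 → d ≤ g.totalDegree := fun g hg hg0 =>
    Nat.find_min' hex ⟨g, hg, hg0, rfl⟩
  have hfinal : ∃ c : F, f = C c := by
    by_cases hd : d = 0
    · exact aux_eqC f (hfd.trans hd)
    · apply aux_const
      intro i
      by_contra hne
      have hΔJ : aeval (fun j => X j - if i = j then 1 else 0) f - f ∈ J := by
        refine J.sub_mem ?_ hfJ
        rw [← hφa]
        exact hstab i f hfJ
      have hΔ0 : aeval (fun j => X j - if i = j then 1 else 0) f - f ≠ 0 :=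
        sub_ne_zero.mpr hne
      have h1 := hmin _ hΔJ hΔ0
      have h2 := aux_deg (F := F) i f
      omega
  obtain ⟨c, hC⟩ := hfinal
  have hc : c ≠ 0 := by
    rintro rfl
    exact hf (by rw [hC, map_zero])
  have hu : IsUnit f := by
    rw [hC]
    exact (isUnit_iff_ne_zero.mpr hc).map C
  exact J.eq_top_of_isUnit_mem hfJ hu
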